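/- The map Q ↦ [Q]_α from S_{α+n} to Π_α is constant on double cosets S_n·g·S_n, and two permutations Q, Q' ∈ S_{α+n} lie in the same double coset with respect to S_n if and only if [Q]_α = [Q']_α. -/

import Mathlib

open Equiv

/-- The subgroup `S_n ⊆ S_{α+n}` of permutations fixing `{1,…,α}` pointwise. -/
def fixFirst (α n : ℕ) : Subgroup (Perm (Fin (α + n))) :=
  fixingSubgroup (Perm (Fin (α + n))) {i : Fin (α + n) | (i : ℕ) < α}

/-- The upper-left `α×α` corner of (the permutation matrix of) `Q ∈ S_{α+n}`,
viewed as a partial map `Fin α → Option (Fin α)`. -/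
def corner (α n : ℕ) (Q : Perm (Fin (α + n))) (i : Fin α) : Option (Fin α) :=
  if h : ((Q (Fin.castAdd n i)) : ℕ) < α then some ⟨(Q (Fin.castAdd n i) : ℕ), h⟩ else none

lemma fixFirst_apply {α n : ℕ} {k : Perm (Fin (α + n))} (hk : k ∈ fixFirst α n)
    {j : Fin (α + n)} (hj : (j : ℕ) < α) : k j = j := by
  have := (mem_fixingSubgroup_iff (Perm (Fin (α + n)))).mp hk j hj
  simpa [Perm.smul_def] using this

lemma fixFirst_lt_iff {α n : ℕ} {k : Perm (Fin (α + n))} (hk : k ∈ fixFirst α n)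
    (x : Fin (α + n)) : ((k x : Fin (α + n)) : ℕ) < α ↔ (x : ℕ) < α := by
  constructor
  · intro h
    have h2 : k (k x) = k x := fixFirst_apply hk h
    have := k.injective h2
    rwa [this] at h
  · intro h
    rw [fixFirst_apply hk h]; exact h

/-- `Q ↦ [Q]_α` is constant on double cosets `S_n·g·S_n`, and `Q, Q'` lie in the
same double coset with respect to `S_n` if and only if `[Q]_α = [Q']_α`. -/
theorem doset_eq_iff_corner_eq (α n : ℕ) (Q Q' : Perm (Fin (α + n))) :
    (∃ k₁ ∈ fixFirst α n, ∃ k₂ ∈ fixFirst α n, Q' = k₁ * Q * k₂) ↔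
      corner α n Q = corner α n Q' := by
  classical
  constructor
  · rintro ⟨k₁, hk₁, k₂, hk₂, rfl⟩
    funext i
    have hcast : ((Fin.castAdd n i : Fin (α + n)) : ℕ) < α := by
      simp
    have h2 : k₂ (Fin.castAdd n i) = Fin.castAdd n i := fixFirst_apply hk₂ hcast
    have hiff := fixFirst_lt_iff hk₁ (Q (Fin.castAdd n i))
    simp only [corner, Perm.mul_apply, h2]
    split_ifs with h1 h3 h3
    · exact congrArg some (Fin.ext (congrArg Fin.val (fixFirst_apply hk₁ h1)).symm)
    · exact absurd (by rw [fixFirst_apply hk₁ h1]; exact h1) h3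
    · exact absurd (hiff.mp h3) h1
    · rfl
  · intro hc
    -- extract pointwise consequences of corner equality
    have key2 : ∀ j : Fin (α + n), (j : ℕ) < α →
        (((Q j : Fin (α + n)) : ℕ) < α ↔ ((Q' j : Fin (α + n)) : ℕ) < α) := by
      intro j hj
      have h := congrFun hc ⟨(j : ℕ), hj⟩
      have hcast : Fin.castAdd n ⟨(j : ℕ), hj⟩ = j := Fin.ext rfl
      rw [corner, corner, hcast] at h
      constructor
      · intro hq
        by_contra hq'
        rw [dif_pos hq, dif_neg hq'] at h
        exact Option.some_ne_none _ h
      · intro hq'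
        by_contra hq
        rw [dif_neg hq, dif_pos hq'] at h
        exact Option.some_ne_none _ h.symm
    have keq : ∀ j : Fin (α + n), (j : ℕ) < α → ((Q j : Fin (α + n)) : ℕ) < α →
        Q' j = Q j := by
      intro j hj hq
      have h := congrFun hc ⟨(j : ℕ), hj⟩
      have hcast : Fin.castAdd n ⟨(j : ℕ), hj⟩ = j := Fin.ext rfl
      rw [corner, corner, hcast] at h
      have hq' := (key2 j hj).mp hq
      rw [dif_pos hq, dif_pos hq'] at h
      have := Option.some.inj h
      exact Fin.ext (congrArg Fin.val this).symm
    -- construct k₁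
    set p : Fin (α + n) → Prop := fun j => (j : ℕ) < α with hp
    have hA : ∀ x : {x : {j : Fin (α + n) // ¬ p j} // ((Q⁻¹ x.val : Fin (α + n)) : ℕ) < α},
        ¬ p (Q' (Q⁻¹ x.1.1)) := by
      rintro ⟨⟨j, hj⟩, hx⟩
      simp only [hp]
      intro hcon
      have h3 : ((Q (Q⁻¹ j) : Fin (α + n)) : ℕ) < α := (key2 _ hx).mpr hcon
      rw [Perm.coe_inv, Equiv.apply_symm_apply] at h3
      exact hj h3
    have hB : ∀ x : {x : {j : Fin (α + n) // ¬ p j} // ((Q'⁻¹ x.val : Fin (α + n)) : ℕ) < α},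
        ¬ p (Q (Q'⁻¹ x.1.1)) := by
      rintro ⟨⟨j, hj⟩, hx⟩
      simp only [hp]
      intro hcon
      have heq : Q' (Q'⁻¹ j) = Q (Q'⁻¹ j) := keq _ hx hcon
      rw [show Q' (Q'⁻¹ j) = j from Perm.eq_inv_iff_eq.mp rfl] at heq
      rw [← heq] at hcon
      exact hj hcon
    set e : {x : {j : Fin (α + n) // ¬ p j} // ((Q⁻¹ x.val : Fin (α + n)) : ℕ) < α} ≃
             {x : {j : Fin (α + n) // ¬ p j} // ((Q'⁻¹ x.val : Fin (α + n)) : ℕ) < α} :=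
      Equiv.mk
        (fun x => ⟨⟨Q' (Q⁻¹ x.1.1), hA x⟩, by simpa using x.2⟩)
        (fun x => ⟨⟨Q (Q'⁻¹ x.1.1), hB x⟩, by simpa using x.2⟩)
        (fun x => by ext; simp)
        (fun x => by ext; simp) with he
    set σ₀ := e.extendSubtype with hσ₀
    set k₁ : Perm (Fin (α + n)) := Perm.subtypeCongr (Equiv.refl {j : Fin (α + n) // p j}) σ₀
      with hk₁def
    have hk₁fix : ∀ j : Fin (α + n), (j : ℕ) < α → k₁ j = j := by
      intro j hj
      rw [hk₁def, Perm.subtypeCongr.apply, dif_pos (show p j from hj)]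
      rfl
    have hk₁mem : k₁ ∈ fixFirst α n := by
      rw [fixFirst, mem_fixingSubgroup_iff]
      intro j hj
      exact hk₁fix j hj
    have hQQ' : ∀ j : Fin (α + n), (j : ℕ) < α → k₁ (Q j) = Q' j := by
      intro j hj
      by_cases hq : ((Q j : Fin (α + n)) : ℕ) < α
      · rw [hk₁fix _ hq, keq j hj hq]
      · have hq' : ¬ ((Q' j : Fin (α + n)) : ℕ) < α := fun h => hq ((key2 j hj).mpr h)
        rw [hk₁def, Perm.subtypeCongr.apply, dif_neg (show ¬ p (Q j) from hq)]
        have hmem : ((Q⁻¹ ((⟨Q j, hq⟩ : {j : Fin (α + n) // ¬ p j}).val) : Fin (α + n)) : ℕ)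
            < α := by simpa using hj
        rw [hσ₀, Equiv.extendSubtype_apply_of_mem e _ hmem, he]
        simp only [Equiv.coe_fn_mk]
        simp
    refine ⟨k₁, hk₁mem, Q⁻¹ * k₁⁻¹ * Q', ?_, ?_⟩
    · rw [fixFirst, mem_fixingSubgroup_iff]
      intro j hj
      have h1 : k₁⁻¹ (Q' j) = Q j := by
        rw [← hQQ' j hj, Perm.inv_eq_iff_eq]
      simp only [Perm.smul_def, Perm.mul_apply, h1, Perm.inv_eq_iff_eq]
    · group
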